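/- Let μ, ν be probability measures on ℝ^d with μ absolutely continuous with respect to Lebesgue measure, K ⊆ ℝ^d closed convex, and h : ℝ^d → ℝ strictly convex. Suppose γ is a coupling of μ and ν and φ, ψ : ℝ^d → ℝ are Lipschitz functions satisfying φ(x) + ψ(y) ≤ h(x−y) whenever x − y ∈ K, with equality γ-a.e. Then γ is induced by a map: there exists a Borel map T : ℝ^d → ℝ^d with γ = (id × T)_# μ, given μ-a.e. by T(x) = x − z̄(∇φ(x)), where z̄(l) is the unique minimizer over K of z ↦ h(z) − ⟨l, z⟩. -/

import Mathlib

open MeasureTheory ProbabilityTheory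

/-- A probability measure concentrated at a point is the Dirac measure. -/
lemma aux_eq_dirac {α : Type*} [MeasurableSpace α] [MeasurableSingletonClass α]
    (m : Measure α) [IsProbabilityMeasure m] {a : α} (hm : ∀ᵐ y ∂m, y = a) :
    m = Measure.dirac a := by
  have h0 : m {y | y ≠ a} = 0 := ae_iff.mp hm
  ext s hs
  rw [Measure.dirac_apply' a hs]
  by_cases ha : a ∈ s
  · rw [Set.indicator_of_mem ha]
    have hsub : sᶜ ⊆ {y | y ≠ a} := fun y hy hya => hy (hya ▸ ha)
    have hc : m sᶜ = 0 := measure_mono_null hsub h0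
    have := prob_add_prob_compl (μ := m) hs
    rw [hc, add_zero] at this
    simpa using this
  · rw [Set.indicator_of_notMem ha]
    have hsub : s ⊆ {y | y ≠ a} := fun y hy hya => ha (hya ▸ hy)
    exact measure_mono_null hsub h0

set_option maxHeartbeats 1000000 in
theorem stmt18 {d : ℕ}
    (μ ν : Measure (EuclideanSpace ℝ (Fin d)))
    [IsProbabilityMeasure μ] [IsProbabilityMeasure ν]
    (hac : μ ≪ volume)
    (K : Set (EuclideanSpace ℝ (Fin d))) (hKcl : IsClosed K) (hKconv : Convex ℝ K)
    (h : EuclideanSpace ℝ (Fin d) → ℝ) (hh : StrictConvexOn ℝ Set.univ h)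
    (γ : Measure (EuclideanSpace ℝ (Fin d) × EuclideanSpace ℝ (Fin d)))
    [IsProbabilityMeasure γ] (hfst : γ.fst = μ) (hsnd : γ.snd = ν)
    (φ ψ : EuclideanSpace ℝ (Fin d) → ℝ) (Lφ Lψ : NNReal)
    (hφ : LipschitzWith Lφ φ) (hψ : LipschitzWith Lψ ψ)
    (hineq : ∀ x y, x - y ∈ K → φ x + ψ y ≤ h (x - y))
    (heq : ∀ᵐ p ∂γ, p.1 - p.2 ∈ K ∧ φ p.1 + ψ p.2 = h (p.1 - p.2)) :
    ∃ T : EuclideanSpace ℝ (Fin d) → EuclideanSpace ℝ (Fin d),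
      Measurable T ∧
      γ = μ.map (fun x => (x, T x)) ∧
      ∀ᵐ x ∂μ,
        x - T x ∈ K ∧
        (∀ z ∈ K, h (x - T x) - (inner ℝ (gradient φ x) (x - T x) : ℝ) ≤
          h z - (inner ℝ (gradient φ x) z : ℝ)) ∧
        (∀ z ∈ K, z ≠ x - T x →
          h (x - T x) - (inner ℝ (gradient φ x) (x - T x) : ℝ) <
            h z - (inner ℝ (gradient φ x) z : ℝ)) := by
  classical
  -- the property we will establish
  set P : EuclideanSpace ℝ (Fin d) → EuclideanSpace ℝ (Fin d) → Prop := fun x y =>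
    x - y ∈ K ∧
    (∀ z ∈ K, h (x - y) - (inner ℝ (gradient φ x) (x - y) : ℝ) ≤
      h z - (inner ℝ (gradient φ x) z : ℝ)) ∧
    (∀ z ∈ K, z ≠ x - y →
      h (x - y) - (inner ℝ (gradient φ x) (x - y) : ℝ) <
        h z - (inner ℝ (gradient φ x) z : ℝ)) with hP
  -- Step 1: the pointwise first-order argument
  have key : ∀ x y : EuclideanSpace ℝ (Fin d), DifferentiableAt ℝ φ x → x - y ∈ K →
      φ x + ψ y = h (x - y) → P x y := by
    intro x y hx hxyK hxyeq
    set l : EuclideanSpace ℝ (Fin d) := gradient φ x with hl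
    set z0 : EuclideanSpace ℝ (Fin d) := x - y with hz0
    -- weak minimality
    have weak : ∀ z ∈ K, h z0 - (inner ℝ l z0 : ℝ) ≤ h z - (inner ℝ l z : ℝ) := by
      intro z hz
      set v : EuclideanSpace ℝ (Fin d) := z - z0 with hv
      -- directional derivative bound
      have hbound : ∀ t : ℝ, t ∈ Set.Ioc (0:ℝ) 1 →
          φ (x + t • v) - φ x ≤ t * (h z - h z0) := by
        intro t ht
        have hzt : z0 + t • v ∈ K := by
          have : z0 + t • v = (1 - t) • z0 + t • z := by
            rw [hv]; module
          rw [this]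
          exact hKconv hxyK hz (by linarith [ht.2] : (0:ℝ) ≤ 1 - t) ht.1.le (by ring : (1 - t) + t = 1)
        have hdiff : (x + t • v) - y = z0 + t • v := by
          rw [hz0]; abel
        have h1 : φ (x + t • v) + ψ y ≤ h (z0 + t • v) := by
          have := hineq (x + t • v) y (by rw [hdiff]; exact hzt)
          rwa [hdiff] at this
        have h2 : h (z0 + t • v) ≤ (1 - t) * h z0 + t * h z := by
          have hc := hh.convexOn.2 (Set.mem_univ z0) (Set.mem_univ z)
            (by linarith [ht.2] : (0:ℝ) ≤ 1 - t) ht.1.le (by ring)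
          have : z0 + t • v = (1 - t) • z0 + t • z := by rw [hv]; module
          rw [this]
          simpa using hc
        have h3 : φ x + ψ y = h z0 := hxyeq
        linarith
      -- the derivative of t ↦ φ (x + t v) at 0 is ⟪l, v⟫
      have hline : HasDerivAt (fun t : ℝ => x + t • v) v 0 := by
        simpa using ((hasDerivAt_id (0:ℝ)).smul_const v).const_add x
      have hF : HasFDerivAt φ (InnerProductSpace.toDual ℝ (EuclideanSpace ℝ (Fin d)) l) x :=
        hx.hasGradientAt.hasFDerivAt
      have hF' : HasFDerivAt φ (InnerProductSpace.toDual ℝ (EuclideanSpace ℝ (Fin d)) l) (x + (0:ℝ) • v) := by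
        simpa using hF
      have hcomp : HasDerivAt (fun t : ℝ => φ (x + t • v)) ((inner ℝ l v : ℝ)) 0 := by
        have := hF'.comp_hasDerivAt 0 hline
        simp only [InnerProductSpace.toDual_apply_apply] at this
        exact this
      have hslope : Filter.Tendsto (slope (fun t : ℝ => φ (x + t • v)) 0)
          (nhdsWithin 0 (Set.Ioi 0)) (nhds ((inner ℝ l v : ℝ))) :=
        (hasDerivAt_iff_tendsto_slope.mp hcomp).mono_left
          (nhdsWithin_mono _ (fun t ht => ne_of_gt ht))
      have hle : (inner ℝ l v : ℝ) ≤ h z - h z0 := by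
        refine le_of_tendsto hslope ?_
        filter_upwards [Ioc_mem_nhdsGT_of_mem (Set.mem_Ico.2 ⟨le_refl (0:ℝ), one_pos⟩)]
          with t ht
        have hb := hbound t ht
        have h0 : φ (x + (0:ℝ) • v) = φ x := by simp
        rw [slope_def_field]
        rw [h0, sub_zero, div_le_iff₀ ht.1]
        linarith
      have hiv : (inner ℝ l v : ℝ) = (inner ℝ l z : ℝ) - (inner ℝ l z0 : ℝ) := by
        rw [hv, inner_sub_right]
      linarith [hle, hiv.symm.le, hiv.le]
    refine ⟨hxyK, weak, ?_⟩
    -- strict minimality via midpoint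
    intro z hz hne
    set m : EuclideanSpace ℝ (Fin d) := (2⁻¹ : ℝ) • z0 + (2⁻¹ : ℝ) • z with hm
    have hmK : m ∈ K := hKconv hxyK hz (by norm_num) (by norm_num) (by norm_num)
    have hstrict : h m < (2⁻¹ : ℝ) * h z0 + (2⁻¹ : ℝ) * h z := by
      have := hh.2 (Set.mem_univ z0) (Set.mem_univ z) (fun hc => hne (hc.symm))
        (by norm_num : (0:ℝ) < 2⁻¹) (by norm_num : (0:ℝ) < 2⁻¹) (by norm_num : (2⁻¹:ℝ) + 2⁻¹ = 1)
      simpa [smul_eq_mul] using this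
    have hweakm := weak m hmK
    have hinner : (inner ℝ l m : ℝ) = (2⁻¹ : ℝ) * (inner ℝ l z0 : ℝ) + (2⁻¹ : ℝ) * (inner ℝ l z : ℝ) := by
      rw [hm, inner_add_right, real_inner_smul_right, real_inner_smul_right]
    linarith
  -- Step 2: differentiability a.e., transferred to γ
  have hDμ : ∀ᵐ x ∂μ, DifferentiableAt ℝ φ x :=
    hac.ae_le (hφ.ae_differentiableAt)
  have hDγ : ∀ᵐ p ∂γ, DifferentiableAt ℝ φ p.1 := by
    have hmap : ∀ᵐ x ∂(γ.map Prod.fst), DifferentiableAt ℝ φ x := by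
      have : γ.map Prod.fst = μ := hfst
      rw [this]; exact hDμ
    exact (ae_map_iff measurable_fst.aemeasurable
      (measurableSet_of_differentiableAt ℝ φ)).mp hmap
  have hPγ : ∀ᵐ p ∂γ, P p.1 p.2 := by
    filter_upwards [heq, hDγ] with p hp hD
    exact key p.1 p.2 hD hp.1 hp.2
  -- Step 3: disintegration
  set κ := γ.condKernel with hκ
  have hdis : μ ⊗ₘ κ = γ := by
    rw [← hfst]; exact γ.disintegrate γ.condKernel
  have hPκ : ∀ᵐ x ∂μ, ∀ᵐ y ∂κ x, P x y :=
    Measure.ae_ae_of_ae_compProd (by rw [hdis]; exact hPγ)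
  -- the transport map
  set T : EuclideanSpace ℝ (Fin d) → EuclideanSpace ℝ (Fin d) := fun x => ∫ y, y ∂(κ x) with hTdef
  have hTmeas : Measurable T := by
    have : StronglyMeasurable fun x : EuclideanSpace ℝ (Fin d) => ∫ y, (Prod.snd) (x, y) ∂(κ x) :=
      (measurable_snd.stronglyMeasurable).integral_kernel_prod_right'
    exact this.measurable
  have hgood : ∀ᵐ x ∂μ, κ x = Measure.dirac (T x) ∧ P x (T x) := by
    filter_upwards [hPκ] with x hx
    haveI hne : (ae (κ x)).NeBot := ae_neBot.2 (IsProbabilityMeasure.ne_zero (κ x))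
    obtain ⟨y₀, hy₀⟩ := hx.exists
    have huniq : ∀ y, P x y → y = y₀ := by
      intro y hy
      by_contra hne'
      have hxy : x - y₀ ≠ x - y := fun hc => hne' (sub_right_injective hc).symm
      have h1 := hy.2.2 (x - y₀) hy₀.1 hxy
      have h2 := hy₀.2.2 (x - y) hy.1 (fun hc => hne' (sub_right_injective hc))
      linarith
    have hae : ∀ᵐ y ∂κ x, y = y₀ := by
      filter_upwards [hx] with y hy using huniq y hy
    have hTx : T x = y₀ := by
      rw [hTdef]
      calc ∫ y, y ∂(κ x) = ∫ _, y₀ ∂(κ x) := integral_congr_ae hae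
        _ = y₀ := by simp
    refine ⟨?_, ?_⟩
    · rw [hTx]; exact aux_eq_dirac (κ x) hae
    · rw [hTx]; exact hy₀
  have hg : Measurable (fun x : EuclideanSpace ℝ (Fin d) => (x, T x)) := measurable_id.prodMk hTmeas
  refine ⟨T, hTmeas, ?_, ?_⟩
  · -- γ = μ.map (fun x => (x, T x))
    rw [← hdis]
    ext s hs
    rw [Measure.compProd_apply hs, Measure.map_apply hg hs]
    have hind : ∀ᵐ x ∂μ, κ x (Prod.mk x ⁻¹' s) =
        Set.indicator ((fun x : EuclideanSpace ℝ (Fin d) => (x, T x)) ⁻¹' s) (fun _ => (1 : ENNReal)) x := by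
      filter_upwards [hgood] with x hx
      rw [hx.1, Measure.dirac_apply' _ (measurable_prodMk_left hs)]
      by_cases hmem : (x, T x) ∈ s <;>
        simp [Set.indicator_apply, Set.mem_preimage, hmem]
    rw [lintegral_congr_ae hind, lintegral_indicator (hg hs)]
    simp
  · filter_upwards [hgood] with x hx
    exact hx.2
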